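/- Let G be a connected topological group acting continuously on a connected metric space M with more than one point. If the action Φ is expansive in the Bowen–Walters sense for group actions, then Φ has no fixed points: there is no p ∈ M with g·p = p for all g ∈ G. -/

import Mathlib

/-- A Bowen–Walters expansive action of a connected topological
group on a connected metric space with more than one point has no fixed
points. -/
theorem stmt_5 {G M : Type*} [Group G] [MetricSpace G] [IsTopologicalGroup G]
    [ConnectedSpace G] [MetricSpace M] [ConnectedSpace M]
    (hinv : ∀ a b c : G, dist (a * c) (b * c) = dist a b)
    (Φ : G → M → M)
    (hΦ1 : ∀ x, Φ 1 x = x) (hΦm : ∀ g h x, Φ (g * h) x = Φ g (Φ h x))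
    (hΦc : Continuous fun p : G × M => Φ p.1 p.2)
    (hM : ∃ a b : M, a ≠ b)
    (hexp : ∀ ε > (0 : ℝ), ∃ δ > (0 : ℝ), ∀ x y : M, ∀ h : G → G,
      Continuous h → h 1 = 1 →
      (∀ g : G, dist (Φ g x) (Φ (h g) y) < δ) →
      ∃ g₀ : G, dist g₀ 1 < ε ∧ y = Φ g₀ x) :
    ¬ ∃ p : M, ∀ g : G, Φ g p = p := by
  rintro ⟨p, hp⟩
  obtain ⟨δ, hδ, hE⟩ := hexp 1 one_pos
  -- every point within δ of p equals p
  have key : ∀ y : M, dist p y < δ → y = p := by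
    intro y hy
    obtain ⟨g₀, _, hg₀⟩ := hE p y (fun _ => 1) continuous_const rfl
      (fun g => by rw [hp g, hΦ1 y]; exact hy)
    rw [hg₀, hp g₀]
  have hopen : IsOpen ({p} : Set M) := by
    rw [Metric.isOpen_iff]
    rintro x rfl
    exact ⟨δ, hδ, fun y hy => key y (by rwa [dist_comm, ← Metric.mem_ball])⟩
  have hclopen : IsClopen ({p} : Set M) := ⟨isClosed_singleton, hopen⟩
  obtain ⟨a, b, hab⟩ := hM
  have huniv := hclopen.eq_univ ⟨p, rfl⟩
  have ha : a = p := by have := Set.mem_univ a; rw [← huniv] at this; exact this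
  have hb : b = p := by have := Set.mem_univ b; rw [← huniv] at this; exact this
  exact hab (ha.trans hb.symm)
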